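/- Let R be a commutative ℂ-algebra, n a natural number, λ a nonzero complex number, and N a nilpotent n×n complex matrix; set B = λ·1 + N. Let M be a skew-symmetric n×n matrix with entries in R such that M * B (with B viewed over R) is again skew-symmetric. Then there exists an n×n complex matrix S with S * S = B and M * B = Sᵀ * M * S (with S viewed over R); in particular S is invertible. -/

import Mathlib

open Matrix

/-- In a commutative ℂ-algebra, a unit plus a nilpotent has an invertible square root. -/
lemma sqrt_aux {A : Type*} [CommRing A] [Algebra ℂ A] :
    ∀ k : ℕ, ∀ e s : A, e ^ k = 0 → IsUnit s → ∃ t : A, IsUnit t ∧ t ^ 2 = s ^ 2 + e := by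
  intro k
  induction k using Nat.strong_induction_on with
  | _ k IH =>
  intro e s he hs
  match k with
  | 0 =>
    have : (0 : A) = 1 := by simpa using he.symm
    have : Subsingleton A := subsingleton_of_zero_eq_one this
    exact ⟨s, hs, Subsingleton.elim _ _⟩
  | 1 =>
    refine ⟨s, hs, ?_⟩
    rw [show e = 0 by simpa using he, add_zero]
  | (m+2) =>
    have h2 : IsUnit ((2 : A) * s) := by
      refine (IsUnit.mul ?_ hs)
      have : (2 : A) = algebraMap ℂ A 2 := by
        rw [map_ofNat]
      rw [this]
      exact (isUnit_iff_ne_zero.2 (by norm_num)).map (algebraMap ℂ A)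
    set c : A := ↑h2.unit⁻¹ with hc
    have hcc : (2 : A) * s * c = 1 := h2.unit.mul_inv
    have hen : IsNilpotent e := ⟨m + 2, he⟩
    have ht0 : IsUnit (s + e * c) :=
      IsNilpotent.isUnit_add_left_of_commute ((Commute.all _ _).isNilpotent_mul_right hen) hs (Commute.all _ _)
    -- error term
    have hkey : (s + e * c) ^ 2 = s ^ 2 + e + e ^ 2 * c ^ 2 := by
      have : (s + e * c) ^ 2 = s ^ 2 + e * ((2 : A) * s * c) + e ^ 2 * c ^ 2 := by ring
      rw [this, hcc, mul_one]
    have hj : (m + 3) / 2 < m + 2 := by omega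
    have hepow : (-(e ^ 2 * c ^ 2)) ^ ((m + 3) / 2) = 0 := by
      have h1 : e ^ (2 * ((m + 3) / 2)) = 0 := by
        have : 2 * ((m + 3) / 2) = (m + 2) + (2 * ((m + 3) / 2) - (m + 2)) := by omega
        rw [this, pow_add, he, zero_mul]
      rw [neg_pow, mul_pow, ← pow_mul, h1]
      ring
    obtain ⟨t, ht, ht2⟩ := IH _ hj (-(e ^ 2 * c ^ 2)) (s + e * c) hepow ht0
    refine ⟨t, ht, ?_⟩
    rw [ht2, hkey]; ring

/-- Proposition A.3: if `M` is skew-symmetric over a commutative `ℂ`-algebra and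
`M * B` is again skew-symmetric, where `B = λ·1 + N` with `λ ≠ 0` and `N` nilpotent
complex, then there is a complex matrix `S` with `S * S = B` and `M * B = Sᵀ * M * S`;
in particular `S` is invertible. -/
theorem stmt_3 (R : Type*) [CommRing R] [Algebra ℂ R] (n : ℕ)
    (lam : ℂ) (hlam : lam ≠ 0)
    (N : Matrix (Fin n) (Fin n) ℂ) (hN : IsNilpotent N)
    (M : Matrix (Fin n) (Fin n) R) (hM : Mᵀ = -M)
    (hskew :
      (M * ((lam • (1 : Matrix (Fin n) (Fin n) ℂ) + N).map (algebraMap ℂ R)))ᵀ =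
      -(M * ((lam • (1 : Matrix (Fin n) (Fin n) ℂ) + N).map (algebraMap ℂ R)))) :
    ∃ S : Matrix (Fin n) (Fin n) ℂ,
      S * S = lam • (1 : Matrix (Fin n) (Fin n) ℂ) + N ∧
      M * ((lam • (1 : Matrix (Fin n) (Fin n) ℂ) + N).map (algebraMap ℂ R)) =
        (S.map (algebraMap ℂ R))ᵀ * M * (S.map (algebraMap ℂ R)) ∧
      IsUnit S := by
  classical
  letI : CommRing ↥(Algebra.adjoin ℂ {N}) :=
    Algebra.adjoinCommRingOfComm ℂ (by rintro a rfl b rfl; rfl)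
  obtain ⟨μ, hμ⟩ := IsAlgClosed.exists_pow_nat_eq lam (n := 2) (by norm_num)
  have hμ0 : μ ≠ 0 := by rintro rfl; exact hlam (by simpa using hμ.symm)
  obtain ⟨k, hk⟩ := hN
  set e : ↥(Algebra.adjoin ℂ {N}) := ⟨N, Algebra.subset_adjoin rfl⟩ with he'
  have hek : e ^ k = 0 := by
    apply Subtype.ext
    rw [SubmonoidClass.coe_pow]
    simpa [he'] using hk
  have hsu : IsUnit (algebraMap ℂ ↥(Algebra.adjoin ℂ {N}) μ) :=
    (isUnit_iff_ne_zero.2 hμ0).map _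
  obtain ⟨t, htu, ht2⟩ := sqrt_aux k e (algebraMap ℂ _ μ) hek hsu
  have hBt : ((t : Matrix (Fin n) (Fin n) ℂ)) * (t : Matrix (Fin n) (Fin n) ℂ)
      = lam • (1 : Matrix (Fin n) (Fin n) ℂ) + N := by
    have := congrArg (Subtype.val) ht2
    push_cast at this
    rw [← pow_two, this, ← map_pow, hμ, Algebra.algebraMap_eq_smul_one]
  refine ⟨(t : Matrix (Fin n) (Fin n) ℂ), hBt, ?_, htu.map (Algebra.adjoin ℂ {N}).val⟩
  set B : Matrix (Fin n) (Fin n) ℂ := lam • (1 : Matrix (Fin n) (Fin n) ℂ) + N with hB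
  have hMB : (B.map (algebraMap ℂ R))ᵀ * M = M * B.map (algebraMap ℂ R) := by
    have h1 : (M * B.map (algebraMap ℂ R))ᵀ = (B.map (algebraMap ℂ R))ᵀ * Mᵀ := by
      rw [transpose_mul]
    rw [hskew, hM] at h1
    have := congrArg Neg.neg h1
    simpa [mul_neg, neg_neg] using this.symm
  have key : ∀ X ∈ Algebra.adjoin ℂ {N},
      M * X.map (algebraMap ℂ R) = (X.map (algebraMap ℂ R))ᵀ * M := by
    intro X hX
    induction hX using Algebra.adjoin_induction with
    | mem x hx =>
      have hxN : x = N := hx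
      subst hxN
      have hmap : B.map (algebraMap ℂ R)
          = (algebraMap ℂ R lam) • (1 : Matrix (Fin n) (Fin n) R)
            + x.map (algebraMap ℂ R) := by
        rw [hB, Matrix.map_add _ (map_add _)]
        congr 1
        rw [show lam • (1 : Matrix (Fin n) (Fin n) ℂ) = Matrix.diagonal (fun _ => lam) by
            simp [Matrix.smul_one_eq_diagonal],
          Matrix.diagonal_map (map_zero _), Matrix.smul_one_eq_diagonal]
      rw [hmap] at hMB
      simp only [transpose_add, transpose_smul, transpose_one, add_mul, mul_add] at hMB
      rw [smul_mul_assoc, mul_smul_comm, one_mul, mul_one] at hMB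
      exact (add_left_cancel hMB).symm
    | algebraMap r =>
      have h1 : (algebraMap ℂ (Matrix (Fin n) (Fin n) ℂ) r).map (algebraMap ℂ R)
          = algebraMap ℂ (Matrix (Fin n) (Fin n) R) r := by
        simp [Matrix.algebraMap_eq_diagonal, Matrix.diagonal_map (map_zero _)]
      have hdt : (algebraMap ℂ (Matrix (Fin n) (Fin n) R) r)ᵀ
          = algebraMap ℂ (Matrix (Fin n) (Fin n) R) r := by
        simp [Matrix.algebraMap_eq_diagonal]
      rw [h1, hdt]
      exact (Algebra.commutes r M).symm
    | add x y hx hy ihx ihy =>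
      rw [Matrix.map_add _ (map_add _), mul_add, ihx, ihy, transpose_add, add_mul]
    | mul x y hx hy ihx ihy =>
      have hxy : x * y = y * x :=
        congrArg Subtype.val (mul_comm (⟨x, hx⟩ : Algebra.adjoin ℂ {N}) ⟨y, hy⟩)
      rw [Matrix.map_mul, ← mul_assoc, ihx, mul_assoc, ihy, ← mul_assoc, ← transpose_mul,
        ← Matrix.map_mul, ← hxy, Matrix.map_mul]
  have hcomm := key _ t.2
  calc M * B.map (algebraMap ℂ R)
      = M * ((t : Matrix (Fin n) (Fin n) ℂ).map (algebraMap ℂ R)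
          * (t : Matrix (Fin n) (Fin n) ℂ).map (algebraMap ℂ R)) := by
        rw [← Matrix.map_mul, hBt]
    _ = ((t : Matrix (Fin n) (Fin n) ℂ).map (algebraMap ℂ R))ᵀ * M
          * (t : Matrix (Fin n) (Fin n) ℂ).map (algebraMap ℂ R) := by
        rw [← mul_assoc, hcomm]
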